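/- Progress lemma: Let Π_φ = { (s1, s2, τ1) | τ1 ∈ Traces(s1) ∧ (s1,s2) ∈ fei_φ } with the proof-step relation (s1,s2,e1·τ1') →^{e2} (s1',s2',τ1') defined whenever s1 ⇝^{e1} s1', s2 ⇝^{e2} s2', and (e1,e2) ∈ φ, with both resulting components in Π_φ. Then every proof state in Π_φ has a successor: for all π ∈ Π_φ there exist e2 and π' ∈ Π_φ with π →^{e2} π'. -/
import Mathlib

/-- A labeled transition system: states, optional-event-labeled steps, an initial state. -/
structure LTS (S E : Type*) where
  init : S
  step : S → Option E → S → Prop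

namespace LTS

/-- Silent transition. -/
def Silent {S E : Type*} (T : LTS S E) (s s' : S) : Prop := T.step s none s'

/-- `Obs T s e s'`: finitely many silent steps followed by an `e`-labeled step. -/
def Obs {S E : Type*} (T : LTS S E) (s : S) (e : E) (s' : S) : Prop :=
  ∃ s'', Relation.ReflTransGen T.Silent s s'' ∧ T.step s'' (some e) s'

/-- `τ` is an (infinite) trace originating from state `s`. -/
def IsTraceFrom {S E : Type*} (T : LTS S E) (s : S) (τ : ℕ → E) : Prop :=
  ∃ π : ℕ → S, π 0 = s ∧ ∀ i, T.Obs (π i) (τ i) (π (i + 1))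

end LTS

/-- Greatest fixed point of an operator on subsets. -/
def nuSet {A : Type*} (F : Set A → Set A) : Set A := ⋃₀ {R | R ⊆ F R}

/-- The ∀∃-invariant functor. -/
def feiF {S1 S2 E1 E2 : Type*} (T1 : LTS S1 E1) (T2 : LTS S2 E2) (φ : Set (E1 × E2))
    (R : Set (S1 × S2)) : Set (S1 × S2) :=
  {p | ∀ e1 s1', T1.Obs p.1 e1 s1' →
        ∃ e2 s2', T2.Obs p.2 e2 s2' ∧ (e1, e2) ∈ φ ∧ (s1', s2') ∈ R}

/-- Proof states: a state of each system together with a trace of the first state,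
where the two states are related by `fei_φ`. -/
def PiSet {S1 S2 E1 E2 : Type*} (T1 : LTS S1 E1) (T2 : LTS S2 E2) (φ : Set (E1 × E2)) :
    Set (S1 × S2 × (ℕ → E1)) :=
  {p | T1.IsTraceFrom p.1 p.2.2 ∧ (p.1, p.2.1) ∈ nuSet (feiF T1 T2 φ)}

/-- The labeled proof-step relation on proof states. -/
def ProofStep {S1 S2 E1 E2 : Type*} (T1 : LTS S1 E1) (T2 : LTS S2 E2) (φ : Set (E1 × E2))
    (p : S1 × S2 × (ℕ → E1)) (e2 : E2) (p' : S1 × S2 × (ℕ → E1)) : Prop :=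
  T1.Obs p.1 (p.2.2 0) p'.1 ∧ T2.Obs p.2.1 e2 p'.2.1 ∧
    (p.2.2 0, e2) ∈ φ ∧ p'.2.2 = fun i => p.2.2 (i + 1)

theorem progress {S1 S2 E1 E2 : Type*} (T1 : LTS S1 E1) (T2 : LTS S2 E2)
    (φ : Set (E1 × E2)) :
    ∀ p ∈ PiSet T1 T2 φ, ∃ (e2 : E2) (p' : S1 × S2 × (ℕ → E1)),
      p' ∈ PiSet T1 T2 φ ∧ ProofStep T1 T2 φ p e2 p' := by
  rintro ⟨s1, s2, τ⟩ ⟨⟨π, hπ0, hπ⟩, hnu⟩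
  obtain ⟨R, hR, hmem⟩ := hnu
  have hstep := hπ 0
  rw [hπ0] at hstep
  obtain ⟨e2, s2', hobs2, hφ, hR'⟩ := hR hmem (τ 0) (π 1) hstep
  refine ⟨e2, ⟨π 1, s2', fun i => τ (i + 1)⟩, ⟨⟨fun i => π (i + 1), rfl, fun i => hπ (i + 1)⟩, ⟨R, hR, hR'⟩⟩, ?_, hobs2, hφ, rfl⟩
  simpa [hπ0] using hπ 0
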